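/- For every x in [0,1], f(1 - x) = 1 - f(x); that is, the graph of Bourbaki's function has rotational symmetry about the point (1/2, 1/2). -/
import Mathlib


open intervalIntegral Set

theorem bourbaki_stmt (f : ℝ → ℝ)
    (hcont : ContinuousOn f (Set.Icc 0 1))
    (h0 : f 0 = 0) (h1 : f 1 = 1)
    (hw1 : ∀ x ∈ Set.Icc (0:ℝ) 1, f (x / 3) = (2/3) * f x)
    (hw2 : ∀ x ∈ Set.Icc (0:ℝ) 1, f ((2 - x) / 3) = (1/3) * (1 + f x))
    (hw3 : ∀ x ∈ Set.Icc (0:ℝ) 1, f ((2 + x) / 3) = 1/3 + (2/3) * f x) :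
    ∀ x ∈ Set.Icc (0:ℝ) 1, f (1 - x) = 1 - f x := by
  set g : ℝ → ℝ := fun x => f (1 - x) + f x - 1 with hg
  suffices hs : ∀ x ∈ Icc (0:ℝ) 1, g x = 0 by
    intro x hx
    have := hs x hx
    simp only [hg] at this
    linarith
  have hgc : ContinuousOn g (Icc 0 1) := by
    apply ContinuousOn.sub _ continuousOn_const
    apply ContinuousOn.add _ hcont
    exact hcont.comp (continuousOn_const.sub continuousOn_id)
      (fun x hx => ⟨by linarith [hx.2], by linarith [hx.1]⟩)
  have key : ∀ x ∈ Icc (0:ℝ) 1, ∃ y ∈ Icc (0:ℝ) 1, |g x| ≤ (2/3) * |g y| := by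
    intro x ⟨hx0, hx1⟩
    rcases le_or_gt x (1/3) with h13 | h13
    · refine ⟨3*x, ⟨by linarith, by linarith⟩, ?_⟩
      set y := 3*x with hy
      have hyI : y ∈ Icc (0:ℝ) 1 := ⟨by linarith, by linarith⟩
      have h1yI : (1 - y) ∈ Icc (0:ℝ) 1 := ⟨by simp at hyI ⊢; linarith [hyI.2], by linarith [hyI.1]⟩
      have e1 : f x = (2/3) * f y := by
        have := hw1 y hyI
        rwa [show y / 3 = x by rw [hy]; ring] at this
      have e2 : f (1 - x) = 1/3 + (2/3) * f (1 - y) := by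
        have := hw3 (1 - y) h1yI
        rwa [show (2 + (1 - y)) / 3 = 1 - x by rw [hy]; ring] at this
      have : g x = (2/3) * g y := by simp only [hg]; rw [e1, e2]; ring
      rw [this, abs_mul, show |(2:ℝ)/3| = 2/3 by norm_num]
    rcases le_or_gt x (2/3) with h23 | h23
    · refine ⟨2 - 3*x, ⟨by linarith, by linarith⟩, ?_⟩
      set y := 2 - 3*x with hy
      have hyI : y ∈ Icc (0:ℝ) 1 := ⟨by rw [hy]; linarith, by rw [hy]; linarith⟩
      have h1yI : (1 - y) ∈ Icc (0:ℝ) 1 := ⟨by rw [hy]; linarith, by rw [hy]; linarith⟩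
      have e1 : f x = (1/3) * (1 + f y) := by
        have := hw2 y hyI
        rwa [show (2 - y) / 3 = x by rw [hy]; ring] at this
      have e2 : f (1 - x) = (1/3) * (1 + f (1 - y)) := by
        have := hw2 (1 - y) h1yI
        rwa [show (2 - (1 - y)) / 3 = 1 - x by rw [hy]; ring] at this
      have hgx : g x = (1/3) * g y := by simp only [hg]; rw [e1, e2]; ring
      rw [hgx, abs_mul]
      have : |(1:ℝ)/3| = 1/3 := by norm_num
      rw [this]
      nlinarith [abs_nonneg (g y)]
    · refine ⟨3*x - 2, ⟨by linarith, by linarith⟩, ?_⟩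
      set y := 3*x - 2 with hy
      have hyI : y ∈ Icc (0:ℝ) 1 := ⟨by rw [hy]; linarith, by rw [hy]; linarith⟩
      have h1yI : (1 - y) ∈ Icc (0:ℝ) 1 := ⟨by rw [hy]; linarith, by rw [hy]; linarith⟩
      have e1 : f x = 1/3 + (2/3) * f y := by
        have := hw3 y hyI
        rwa [show (2 + y) / 3 = x by rw [hy]; ring] at this
      have e2 : f (1 - x) = (2/3) * f (1 - y) := by
        have := hw1 (1 - y) h1yI
        rwa [show (1 - y) / 3 = 1 - x by rw [hy]; ring] at this
      have hgx : g x = (2/3) * g y := by simp only [hg]; rw [e1, e2]; ring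
      rw [hgx, abs_mul, show |(2:ℝ)/3| = 2/3 by norm_num]
  obtain ⟨z, hz, hmax⟩ := isCompact_Icc.exists_isMaxOn (Set.nonempty_Icc.2 (by norm_num))
    (hgc.abs)
  have hz0 : |g z| ≤ 0 := by
    obtain ⟨y, hyI, hle⟩ := key z hz
    have h2 : |g y| ≤ |g z| := hmax hyI
    linarith
  intro x hx
  have := hmax hx
  have : |g x| ≤ |g z| := this
  have : |g x| ≤ 0 := le_trans this hz0
  exact abs_nonpos_iff.mp this
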